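/- Let k₁, k₃ ∈ ℝ and let λ : ℝ → ℝ be twice differentiable with λ'(t) ≠ 0 for all t. Let A, B, C, E : ℝ → ℝ be differentiable with B(t) ≠ 0 and C(t) ≠ 0 for all t, and let Ã, B̃, C̃, Ẽ : ℝ → ℝ be differentiable with Ã(λ(t)) = e^{5k₁} A(t)/λ'(t), B̃(λ(t)) = e^{3k₁} B(t)/λ'(t), C̃(λ(t)) = e^{3k₁-k₃} C(t)/λ'(t), Ẽ(λ(t)) = e^{k₁-k₃} E(t)/λ'(t) for all t. Then for every t, Ã(λ(t))³ (Ã'(λ(t)) Ẽ(λ(t)) − Ã(λ(t)) Ẽ'(λ(t)))² / (B̃(λ(t))⁷ C̃(λ(t))²) = A(t)³ (A'(t) E(t) − A(t) E'(t))² / (B(t)⁷ C(t)²). That is, J₃⁽¹⁾ = A³(A_t E − A E_t)²/(B⁷C²) is a differential invariant of first order of the equivalence group of subclass (3). -/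

import Mathlib

set_option maxHeartbeats 1000000

private lemma deriv_const_mul_div (c : ℝ) (f L : ℝ → ℝ)
    (hf : Differentiable ℝ f) (hL : Differentiable ℝ L) (t : ℝ) (h : L t ≠ 0) :
    deriv (fun s => c * f s / L s) t
      = (c * deriv f t * L t - c * f t * deriv L t) / (L t) ^ 2 := by
  rw [deriv_fun_div (hf.const_mul c).differentiableAt hL.differentiableAt h,
    deriv_const_mul c hf.differentiableAt]
  try ring

/-- `J₃⁽¹⁾ = A³(A_t E − A E_t)²/(B⁷C²)` is a first-order differential invariant of the
equivalence group of the undamped fifth-order KdV subclass (3). -/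
theorem J3_first_order_invariant
    (k₁ k₃ : ℝ)
    (lam : ℝ → ℝ) (hlam : Differentiable ℝ lam)
    (hlam2 : Differentiable ℝ (deriv lam)) (hlam' : ∀ t, deriv lam t ≠ 0)
    (A B C E : ℝ → ℝ) (hA : Differentiable ℝ A) (hB : Differentiable ℝ B)
    (hC : Differentiable ℝ C) (hE : Differentiable ℝ E)
    (hBne : ∀ t, B t ≠ 0) (hCne : ∀ t, C t ≠ 0)
    (At Bt Ct Et : ℝ → ℝ) (hAt : Differentiable ℝ At) (hBt : Differentiable ℝ Bt)
    (hCt : Differentiable ℝ Ct) (hEt : Differentiable ℝ Et)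
    (hAtr : ∀ t, At (lam t) = Real.exp (5 * k₁) * A t / deriv lam t)
    (hBtr : ∀ t, Bt (lam t) = Real.exp (3 * k₁) * B t / deriv lam t)
    (hCtr : ∀ t, Ct (lam t) = Real.exp (3 * k₁ - k₃) * C t / deriv lam t)
    (hEtr : ∀ t, Et (lam t) = Real.exp (k₁ - k₃) * E t / deriv lam t) :
    ∀ t,
      At (lam t) ^ 3 * (deriv At (lam t) * Et (lam t) - At (lam t) * deriv Et (lam t)) ^ 2
          / (Bt (lam t) ^ 7 * Ct (lam t) ^ 2)
        = A t ^ 3 * (deriv A t * E t - A t * deriv E t) ^ 2 / (B t ^ 7 * C t ^ 2) := by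
  intro t
  have hLt := hlam' t
  -- chain rule for At ∘ lam and Et ∘ lam
  have hAc : deriv At (lam t) * deriv lam t
      = deriv (fun s => Real.exp (5 * k₁) * A s / deriv lam s) t := by
    have hfun : (At ∘ lam) = fun s => Real.exp (5 * k₁) * A s / deriv lam s :=
      funext hAtr
    rw [← hfun, deriv_comp t (hAt _) (hlam _)]
  have hEc : deriv Et (lam t) * deriv lam t
      = deriv (fun s => Real.exp (k₁ - k₃) * E s / deriv lam s) t := by
    have hfun : (Et ∘ lam) = fun s => Real.exp (k₁ - k₃) * E s / deriv lam s :=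
      funext hEtr
    rw [← hfun, deriv_comp t (hEt _) (hlam _)]
  rw [deriv_const_mul_div _ _ _ hA hlam2 t hLt] at hAc
  rw [deriv_const_mul_div _ _ _ hE hlam2 t hLt] at hEc
  have hA' := eq_div_of_mul_eq hLt hAc
  have hE' := eq_div_of_mul_eq hLt hEc
  have h5 : Real.exp (5 * k₁) = Real.exp k₁ ^ 5 := by
    rw [show (5 : ℝ) * k₁ = (5 : ℕ) * k₁ by norm_num, Real.exp_nat_mul]
  have h3 : Real.exp (3 * k₁) = Real.exp k₁ ^ 3 := by
    rw [show (3 : ℝ) * k₁ = (3 : ℕ) * k₁ by norm_num, Real.exp_nat_mul]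
  have h3m : Real.exp (3 * k₁ - k₃) = Real.exp k₁ ^ 3 / Real.exp k₃ := by
    rw [Real.exp_sub, h3]
  have h1m : Real.exp (k₁ - k₃) = Real.exp k₁ / Real.exp k₃ := by
    rw [Real.exp_sub]
  rw [hAtr t, hBtr t, hCtr t, hEtr t, hA', hE', h5, h3, h3m, h1m]
  have hx : Real.exp k₁ ≠ 0 := Real.exp_ne_zero _
  have hy : Real.exp k₃ ≠ 0 := Real.exp_ne_zero _
  have hu : Real.exp k₁ ^ 27 * (Real.exp k₁)⁻¹ ^ 27 * (Real.exp k₃ ^ 4 * (Real.exp k₃)⁻¹ ^ 4)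
      * (deriv lam t ^ 19 * (deriv lam t)⁻¹ ^ 19) = 1 := by
    rw [← mul_pow, ← mul_pow, ← mul_pow, mul_inv_cancel₀ hx, mul_inv_cancel₀ hy,
      mul_inv_cancel₀ hLt, one_pow, one_pow, one_pow, one_mul, one_mul]
  field_simp
  ring
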